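/- For a finite group G, the solubility degree P_s(G) = (1/|G|²) · |{(x,y) ∈ G×G : ⟨x,y⟩ soluble}| satisfies P_s(G) ≥ Pr(G), where Pr(G) is the commuting probability; equality holds if and only if G is abelian. -/

import Mathlib

open Subgroup

/-- The soluble radical of a group: the join of all soluble normal subgroups. -/
def solRadical (G : Type*) [Group G] : Subgroup G :=
  sSup {N : Subgroup G | N.Normal ∧ IsSolvable N}

instance solRadical_normal {G : Type*} [Group G] : (solRadical G).Normal := by
  constructor
  intro n hn g
  have h : solRadical G ≤ (solRadical G).comap (MulAut.conj g).toMonoidHom := by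
    apply sSup_le
    rintro N ⟨hnorm, hsol⟩ x hx
    simp only [Subgroup.mem_comap, MulEquiv.coe_toMonoidHom, MulAut.conj_apply]
    exact le_sSup (s := {N : Subgroup G | N.Normal ∧ IsSolvable N}) ⟨hnorm, hsol⟩
      (hnorm.conj_mem x hx g)
  simpa using h hn

/-- The solubilizer of an element `x`: all `g` such that `⟨x, g⟩` is soluble. -/
def solubilizer {G : Type*} [Group G] (x : G) : Set G :=
  {g : G | IsSolvable (Subgroup.closure ({x, g} : Set G))}

/-- The solubility graph: vertices are elements outside the soluble radical,
two distinct vertices adjacent iff they generate a soluble subgroup. -/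
def solGraph (G : Type*) [Group G] : SimpleGraph {x : G // x ∉ solRadical G} where
  Adj a b := a ≠ b ∧ IsSolvable (Subgroup.closure ({a.1, b.1} : Set G))
  symm := ⟨by rintro a b ⟨hne, hs⟩; exact ⟨hne.symm, by rwa [Set.pair_comm]⟩⟩
  loopless := ⟨by rintro a ⟨h, -⟩; exact h rfl⟩

noncomputable instance {G : Type*} [Group G] [Fintype G] :
    Fintype {x : G // x ∉ solRadical G} := Fintype.ofFinite _

/-- The degree of `x` in the solubility graph (as the number of its neighbours). -/
noncomputable def solDeg (G : Type*) [Group G] (x : G) : ℕ :=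
  {g : G | g ∉ solRadical G ∧ g ≠ x ∧
    IsSolvable (Subgroup.closure ({x, g} : Set G))}.ncard

/-- The number of edges of the solubility graph. -/
noncomputable def solEdges (G : Type*) [Group G] : ℕ :=
  (solGraph G).edgeSet.ncard

/-- The solubility degree of a finite group. -/
noncomputable def Ps (G : Type*) [Group G] : ℚ :=
  (Nat.card {p : G × G // IsSolvable (Subgroup.closure ({p.1, p.2} : Set G))} : ℚ) /
    (Nat.card G : ℚ) ^ 2


section AuxStmt8

variable {G : Type*} [Group G]

lemma aux_solvable_closure_of_comm {a b : G} (h : a * b = b * a) :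
    IsSolvable (Subgroup.closure ({a, b} : Set G)) := by
  have h1 : Subgroup.closure ({a, b} : Set G) ≤ Subgroup.centralizer {a, b} := by
    rw [Subgroup.closure_le]
    rintro z (rfl | rfl) <;>
      · rw [SetLike.mem_coe, Subgroup.mem_centralizer_iff]
        rintro m (rfl | rfl) <;> first | rfl | exact h | exact h.symm
  have h2 : Subgroup.closure ({a, b} : Set G) ≤
      Subgroup.centralizer (Subgroup.closure ({a, b} : Set G)) := by
    rw [Subgroup.closure_le]
    rintro z hz
    rw [SetLike.mem_coe, Subgroup.mem_centralizer_iff]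
    intro m hm
    exact (Subgroup.mem_centralizer_iff.mp (h1 hm) z hz).symm
  exact isSolvable_of_comm fun z w =>
    Subtype.ext (Subgroup.mem_centralizer_iff.mp (h2 w.2) z.1 z.2)

lemma aux_solvable_closure_of_normalizer {p : ℕ} [Fact p.Prime] [Finite G]
    {P : Subgroup G} (hPp : IsPGroup p P) {x g : G} (hx : x ∈ P) (hg : g ∈ (normalizer (P : Set G))) :
    IsSolvable (Subgroup.closure ({x, g} : Set G)) := by
  have hxN : x ∈ (normalizer (P : Set G)) := Subgroup.le_normalizer hx
  set C : Subgroup (normalizer (P : Set G)) := Subgroup.closure {⟨x, hxN⟩, ⟨g, hg⟩} with hC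
  suffices hsC : Group.IsSolvable C by
    have hmapG : Subgroup.map (normalizer (P : Set G)).subtype C = Subgroup.closure ({x, g} : Set G) := by
      rw [hC, MonoidHom.map_closure, Set.image_pair]
      rfl
    have hms : IsSolvable (Subgroup.map (normalizer (P : Set G)).subtype C) :=
      solvable_of_surjective ((normalizer (P : Set G)).subtype.subgroupMap_surjective C)
    rwa [hmapG] at hms
  set π : (normalizer (P : Set G)) →* (normalizer (P : Set G)) ⧸ P.subgroupOf (normalizer (P : Set G)) :=
    QuotientGroup.mk' _ with hπ
  set ψ := π.subgroupMap C with hψ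
  have hkerψ : IsPGroup p ψ.ker := by
    intro y
    have h1 : ψ y.1 = 1 := y.2
    have h2 : π (y.1 : (normalizer (P : Set G))) = 1 := congrArg Subtype.val h1
    have hyP : ((y.1 : (normalizer (P : Set G))) : G) ∈ P :=
      Subgroup.mem_subgroupOf.mp ((QuotientGroup.eq_one_iff _).mp h2)
    obtain ⟨k, hk⟩ := hPp ⟨_, hyP⟩
    refine ⟨k, ?_⟩
    have hk' : ((y.1 : (normalizer (P : Set G))) : G) ^ p ^ k = 1 := by
      simpa [Subtype.ext_iff] using hk
    rw [Subtype.ext_iff, Subtype.ext_iff, Subtype.ext_iff]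
    simpa using hk'
  haveI := hkerψ.isNilpotent
  haveI hsker : Group.IsSolvable ψ.ker := inferInstance
  haveI hmapC : Group.IsSolvable (Subgroup.map π C) := by
    have heq : Subgroup.map π C = Subgroup.zpowers (π ⟨g, hg⟩) := by
      rw [hC, MonoidHom.map_closure, Set.image_pair, Subgroup.zpowers_eq_closure]
      have hx1 : π ⟨x, hxN⟩ = 1 := by
        rw [hπ, QuotientGroup.mk'_apply, QuotientGroup.eq_one_iff, Subgroup.mem_subgroupOf]
        exact hx
      rw [hx1]
      apply le_antisymm
      · rw [Subgroup.closure_le]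
        rintro z (rfl | rfl)
        · exact Subgroup.one_mem _
        · exact Subgroup.subset_closure rfl
      · exact Subgroup.closure_mono (by simp)
    rw [heq]
    infer_instance
  exact solvable_of_ker_le_range ψ.ker.subtype ψ (le_of_eq (Subgroup.range_subtype _).symm)

open scoped commutatorElement in
lemma aux_comm_of_solvable_imp_comm [Fintype G]
    (h : ∀ x y : G, IsSolvable (Subgroup.closure ({x, y} : Set G)) → x * y = y * x)
    (a b : G) : a * b = b * a := by
  rw [← commutatorElement_eq_one_iff_mul_comm]
  by_contra hc
  have hord : orderOf ⁅a, b⁆ ≠ 1 := by simpa [orderOf_eq_one_iff] using hc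
  have hqp : (orderOf ⁅a, b⁆).minFac.Prime := Nat.minFac_prime hord
  haveI : Fact (orderOf ⁅a, b⁆).minFac.Prime := ⟨hqp⟩
  obtain ⟨P⟩ : Nonempty (Sylow (orderOf ⁅a, b⁆).minFac G) := inferInstance
  have hP : normalizer ((P : Subgroup G) : Set G) ≤ Subgroup.centralizer (P : Set G) := by
    intro g hg
    rw [Subgroup.mem_centralizer_iff]
    intro m hm
    exact h m g (aux_solvable_closure_of_normalizer P.2 hm hg)
  have hcP : ∀ u v : (P : Subgroup G), u * v = v * u := fun u v =>
    Subtype.ext (hP (Subgroup.le_normalizer v.2) u.1 u.2)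
  have hker : ⁅a, b⁆ ∈ (MonoidHom.transferSylow P hP).ker := by
    rw [MonoidHom.mem_ker, map_commutatorElement]
    exact commutatorElement_eq_one_iff_mul_comm.mpr (hcP _ _)
  have hdvd : orderOf ⁅a, b⁆ ∣ Nat.card (MonoidHom.transferSylow P hP).ker :=
    Subgroup.orderOf_dvd_natCard _ hker
  exact MonoidHom.not_dvd_card_ker_transferSylow P hP ((Nat.minFac_dvd _).trans hdvd)

end AuxStmt8

theorem stmt8 {G : Type*} [Group G] [Fintype G] :
    Ps G ≥ commProb G ∧ (Ps G = commProb G ↔ ∀ a b : G, a * b = b * a) := by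
  classical
  have hcard_le : Nat.card {p : G × G // Commute p.1 p.2} ≤
      Nat.card {p : G × G // IsSolvable (Subgroup.closure ({p.1, p.2} : Set G))} := by
    apply Nat.card_le_card_of_injective
      (fun z => ⟨z.1, aux_solvable_closure_of_comm z.2⟩)
    intro z w hzw
    simp only [Subtype.mk.injEq] at hzw
    exact Subtype.ext hzw
  have h0 : 0 < Nat.card G := Nat.card_pos
  have hpos : (0 : ℚ) < (Nat.card G : ℚ) ^ 2 := by
    have : (0 : ℚ) < (Nat.card G : ℚ) := by exact_mod_cast h0
    positivity
  constructor
  · rw [ge_iff_le, commProb_def]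
    show _ ≤ Ps G
    rw [Ps]
    exact (div_le_div_iff_of_pos_right hpos).mpr (by exact_mod_cast hcard_le)
  · constructor
    · intro heq
      have hc : (Nat.card {p : G × G // IsSolvable (Subgroup.closure ({p.1, p.2} : Set G))} : ℚ)
          = (Nat.card {p : G × G // Commute p.1 p.2} : ℚ) := by
        rw [Ps, commProb_def] at heq
        rw [div_eq_div_iff (ne_of_gt hpos) (ne_of_gt hpos)] at heq
        exact mul_right_cancel₀ (ne_of_gt hpos) heq
      have hcards : Nat.card {p : G × G // IsSolvable (Subgroup.closure ({p.1, p.2} : Set G))}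
          = Nat.card {p : G × G // Commute p.1 p.2} := Nat.cast_injective hc
      set s : Set (G × G) := {p | Commute p.1 p.2} with hs
      set t : Set (G × G) := {p | IsSolvable (Subgroup.closure ({p.1, p.2} : Set G))} with ht
      have hsub : s ⊆ t := fun p hp => aux_solvable_closure_of_comm hp
      have hle : t.ncard ≤ s.ncard := by
        rw [← Nat.card_coe_set_eq, ← Nat.card_coe_set_eq]
        exact le_of_eq hcards
      have hst : s = t := Set.eq_of_subset_of_ncard_le hsub hle (t.toFinite)
      refine aux_comm_of_solvable_imp_comm (fun x y hxy => ?_)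
      have : ((x, y) : G × G) ∈ t := hxy
      rw [← hst] at this
      exact this
    · intro hab
      haveI : Group.IsSolvable G := isSolvable_of_comm hab
      have hcards : Nat.card {p : G × G // IsSolvable (Subgroup.closure ({p.1, p.2} : Set G))}
          = Nat.card {p : G × G // Commute p.1 p.2} :=
        Nat.card_congr (Equiv.subtypeEquivRight fun p =>
          iff_of_true (show Group.IsSolvable _ by infer_instance) (hab p.1 p.2))
      rw [Ps, commProb_def, hcards]
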